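/- Let 1 < p < ∞ and 1 < r ≤ 2, and set Φ(t) := t^{p'r} and Φ₀(t) := t^{p'(r+1)/2} with p' = p/(p−1). Then there is a constant C depending only on p such that [Φ̄₀]_{B_p} ≤ C·[Φ̄]_{B_p}, where Φ̄ and Φ̄₀ are the complementary Young functions of Φ and Φ₀. -/

import Mathlib

noncomputable section
open Set ENNReal MeasureTheory

/-- The complementary (conjugate) Young function: `φ̄(t) = sup_{s > 0} (s*t - φ(s))`. -/
def conjYoung (Φ : ℝ → ℝ) (t : ℝ) : ℝ :=
  sSup {u : ℝ | ∃ s : ℝ, 0 < s ∧ u = s * t - Φ s}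

/-- `[φ]_{B_q} = ∫_{1/2}^∞ φ(t) t^{-q-1} dt`, as an extended nonnegative real. -/
def bpConst (q : ℝ) (Φ : ℝ → ℝ) : ℝ≥0∞ :=
  ∫⁻ t in Set.Ioi ((1 : ℝ) / 2), ENNReal.ofReal (Φ t / t ^ (q + 1))

lemma conj_rpow_eval (α t : ℝ) (hα : 1 < α) (ht : 0 < t) :
    conjYoung (fun s => s ^ α) t
      = α ^ (1 - α / (α - 1)) / (α / (α - 1)) * t ^ (α / (α - 1)) := by
  set q : ℝ := α / (α - 1) with hqdef
  have hα0 : (0:ℝ) < α := by linarith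
  have hα1 : (0:ℝ) < α - 1 := by linarith
  have hq1 : 1 < q := by
    rw [hqdef, lt_div_iff₀ hα1]; linarith
  have hq0 : (0:ℝ) < q := by linarith
  have hconj : Real.HolderConjugate α q := by
    rw [Real.holderConjugate_iff]
    constructor
    · exact hα
    · rw [hqdef]; field_simp; ring
  have hqα : q * (α - 1) = α := by rw [hqdef]; field_simp
  clear_value q
  have hM : conjYoung (fun s => s ^ α) t = α ^ (1 - q) / q * t ^ q := by
    apply IsGreatest.csSup_eq
    constructor
    · -- membership: take s = (t/α)^(q-1)
      refine ⟨(t / α) ^ (q - 1), Real.rpow_pos_of_pos (div_pos ht hα0) _, ?_⟩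
      have htα : (0:ℝ) ≤ t / α := (div_pos ht hα0).le
      have h1 : ((t / α) ^ (q - 1) : ℝ) ^ α = (t / α) ^ q := by
        rw [← Real.rpow_mul htα]
        congr 1
        linear_combination hqα
      show α ^ (1 - q) / q * t ^ q = (t / α) ^ (q - 1) * t - ((t / α) ^ (q - 1)) ^ α
      rw [h1, Real.div_rpow ht.le hα0.le, Real.div_rpow ht.le hα0.le]
      have hA : (0:ℝ) < α ^ q := Real.rpow_pos_of_pos hα0 _
      have hA1 : α ^ (q - 1) = α ^ q / α := by
        rw [Real.rpow_sub hα0, Real.rpow_one]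
      have hA2 : α ^ (1 - q) = α / α ^ q := by
        rw [Real.rpow_sub hα0, Real.rpow_one]
      have hT : t ^ (q - 1) = t ^ q / t := by
        rw [Real.rpow_sub ht, Real.rpow_one]
      rw [hA1, hA2, hT]
      field_simp
      linear_combination -hqα
    · rintro u ⟨s, hs, rfl⟩
      have key := Real.young_inequality_of_nonneg
        (a := α ^ (1/α) * s) (b := t * α ^ (-(1/α)))
        (by positivity) (by positivity) hconj
      have hab : (α ^ (1/α) * s) * (t * α ^ (-(1/α))) = s * t := by
        have h1 : α ^ (1/α) * α ^ (-(1/α)) = 1 := by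
          rw [← Real.rpow_add hα0]; simp
        rw [show (α ^ (1/α) * s) * (t * α ^ (-(1/α)))
            = (α ^ (1/α) * α ^ (-(1/α))) * (s * t) by ring, h1, one_mul]
      have haα : (α ^ (1/α) * s) ^ α / α = s ^ α := by
        rw [Real.mul_rpow (by positivity) hs.le, ← Real.rpow_mul hα0.le]
        rw [one_div, inv_mul_cancel₀ hα0.ne']
        rw [Real.rpow_one]
        field_simp
      have hbq : (t * α ^ (-(1/α))) ^ q / q = α ^ (1 - q) / q * t ^ q := by
        rw [Real.mul_rpow ht.le (by positivity), ← Real.rpow_mul hα0.le]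
        have h2 : -(1/α) * q = 1 - q := by
          field_simp
          linear_combination hqα
        rw [h2]; ring
      rw [hab, haα, hbq] at key
      linarith
  rw [hM]

lemma bp_rpow (p α : ℝ) (hp : 1 < p) (hα : 1 < α) (hqp : α / (α - 1) < p) :
    bpConst p (conjYoung (fun s => s ^ α)) =
      ENNReal.ofReal (α ^ (1 - α / (α - 1)) / (α / (α - 1))
        * ((1/2 : ℝ) ^ (α / (α - 1) - p) / (p - α / (α - 1)))) := by
  set q : ℝ := α / (α - 1) with hqdef
  set K : ℝ := α ^ (1 - q) / q with hKdef
  have hα0 : (0:ℝ) < α := by linarith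
  have hα1 : (0:ℝ) < α - 1 := by linarith
  have hq1 : 1 < q := by rw [hqdef, lt_div_iff₀ hα1]; linarith
  have hK0 : 0 < K := by
    rw [hKdef]
    positivity
  have ha : q - p - 1 < -1 := by linarith
  have hint : IntegrableOn (fun t : ℝ => t ^ (q - p - 1)) (Ioi (1/2 : ℝ)) :=
    integrableOn_Ioi_rpow_of_lt ha (by norm_num)
  have step1 : bpConst p (conjYoung (fun s => s ^ α))
      = ∫⁻ t in Set.Ioi ((1:ℝ)/2), ENNReal.ofReal K * ENNReal.ofReal (t ^ (q - p - 1)) := by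
    unfold bpConst
    apply setLIntegral_congr_fun measurableSet_Ioi
    intro t ht
    dsimp only
    have ht0 : (0:ℝ) < t := lt_trans (by norm_num) ht
    rw [conj_rpow_eval α t hα ht0, ← hqdef, ← hKdef]
    rw [← ENNReal.ofReal_mul hK0.le]
    congr 1
    rw [show q - p - 1 = q - (p + 1) by ring, Real.rpow_sub ht0]
    ring
  rw [step1, lintegral_const_mul' _ _ ENNReal.ofReal_ne_top]
  have step2 : ∫⁻ t in Set.Ioi ((1:ℝ)/2), ENNReal.ofReal (t ^ (q - p - 1))
      = ENNReal.ofReal ((1/2 : ℝ) ^ (q - p) / (p - q)) := by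
    rw [← MeasureTheory.ofReal_integral_eq_lintegral_ofReal hint]
    · rw [integral_Ioi_rpow_of_lt ha (by norm_num)]
      congr 1
      rw [show q - p - 1 + 1 = q - p by ring]
      rw [div_eq_div_iff (by linarith) (by linarith)]
      ring
    · filter_upwards [ae_restrict_mem measurableSet_Ioi] with t ht
      exact Real.rpow_nonneg (le_of_lt (lt_trans (by norm_num) ht)) _
  rw [step2, ← ENNReal.ofReal_mul hK0.le]

set_option maxHeartbeats 1000000 in
/-- for `1 < p < ∞`, `1 < r ≤ 2`, `Φ(t) = t^{p'r}` and
`Φ₀(t) = t^{p'(r+1)/2}`, one has `[Φ̄₀]_{B_p} ≤ C [Φ̄]_{B_p}` with `C = C(p)`. -/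
theorem stmt15 (p : ℝ) (hp : 1 < p) :
    ∃ C : ℝ, 0 < C ∧ ∀ r : ℝ, 1 < r → r ≤ 2 →
      bpConst p (conjYoung (fun t => t ^ (p / (p - 1) * ((r + 1) / 2)))) ≤
        ENNReal.ofReal C * bpConst p (conjYoung (fun t => t ^ (p / (p - 1) * r))) := by
  have hp1 : (0:ℝ) < p - 1 := by linarith
  have hp0 : (0:ℝ) < p := by linarith
  set p' : ℝ := p / (p - 1) with hp'def
  have hpp' : p' * (p - 1) = p := by rw [hp'def]; field_simp
  have hp'1 : 1 < p' := by rw [hp'def, lt_div_iff₀ hp1]; linarith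
  have hp'0 : (0:ℝ) < p' := by linarith
  clear_value p' 
  set D : ℝ := (1/2 : ℝ) ^ (1 - p) with hDdef
  set M : ℝ := 4 * p' / (p' - 1) with hMdef
  set k0 : ℝ := (2 * p') ^ (1 - p) / p with hk0def
  have hD0 : (0:ℝ) < D := Real.rpow_pos_of_pos (by norm_num) _
  have hM0 : (0:ℝ) < M := div_pos (by linarith) (by linarith)
  have hk00 : (0:ℝ) < k0 := div_pos (Real.rpow_pos_of_pos (by linarith) _) hp0
  clear_value D M k0
  refine ⟨D * M / k0, by positivity, ?_⟩
  intro r hr1 hr2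
  set β : ℝ := p' * r with hβdef
  set γ : ℝ := p' * ((r + 1) / 2) with hγdef
  have hβ1 : 1 < β := by rw [hβdef]; nlinarith
  have hγ1 : 1 < γ := by rw [hγdef]; nlinarith
  have hβp : β * (p - 1) = p * r := by rw [hβdef]; linear_combination r * hpp'
  have hγp : 2 * (γ * (p - 1)) = p * (r + 1) := by
    rw [hγdef]; linear_combination (r + 1) * hpp'
  have hβ2 : β ≤ 2 * p' := by rw [hβdef]; nlinarith
  have hβ3 : p' ≤ β := by rw [hβdef]; nlinarith
  have hγ2 : 2 * γ ≤ 3 * p' := by rw [hγdef]; nlinarith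
  clear_value β γ
  have hβ1' : (0:ℝ) < β - 1 := by linarith
  have hγ1' : (0:ℝ) < γ - 1 := by linarith
  have hbp : β / (β - 1) < p := by rw [div_lt_iff₀ hβ1']; nlinarith
  have hgp : γ / (γ - 1) < p := by rw [div_lt_iff₀ hγ1']; nlinarith
  rw [bp_rpow p γ hp hγ1 hgp, bp_rpow p β hp hβ1 hbp]
  set b : ℝ := β / (β - 1) with hbdef
  set g : ℝ := γ / (γ - 1) with hgdef
  have hb1 : 1 < b := by rw [hbdef, lt_div_iff₀ hβ1']; linarith
  have hg1 : 1 < g := by rw [hgdef, lt_div_iff₀ hγ1']; linarith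
  have hbβ : b * (β - 1) = β := by rw [hbdef]; field_simp
  have hgγ : g * (γ - 1) = γ := by rw [hgdef]; field_simp
  clear_value b g
  have hpb : (0:ℝ) < p - b := by linarith
  have hpg : (0:ℝ) < p - g := by linarith
  rw [← ENNReal.ofReal_mul (by positivity)]
  apply ENNReal.ofReal_le_ofReal
  -- now a purely real inequality
  have A1 : γ ^ (1 - g) / g ≤ 1 := by
    rw [div_le_one (by linarith)]
    exact le_trans (Real.rpow_le_one_of_one_le_of_nonpos hγ1.le (by linarith)) hg1.le
  have A2 : (1/2 : ℝ) ^ (g - p) ≤ D := by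
    rw [hDdef]
    exact Real.rpow_le_rpow_of_exponent_ge (by norm_num) (by norm_num) (by linarith)
  have B2 : (1:ℝ) ≤ (1/2 : ℝ) ^ (b - p) :=
    Real.one_le_rpow_of_pos_of_le_one_of_nonpos (by norm_num) (by norm_num) (by linarith)
  have B1 : k0 ≤ β ^ (1 - b) / b := by
    rw [hk0def]
    have h1 : (2 * p') ^ (1 - p) ≤ β ^ (1 - p) :=
      Real.rpow_le_rpow_of_nonpos (by linarith) hβ2 (by linarith)
    have h2 : β ^ (1 - p) ≤ β ^ (1 - b) :=
      Real.rpow_le_rpow_of_exponent_le hβ1.le (by linarith)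
    exact div_le_div₀ (Real.rpow_nonneg (by linarith) _) (h1.trans h2) (by linarith) hbp.le
  have e1 : (p - b) * (β - 1) = p * (r - 1) := by linear_combination hβp - hbβ
  have e2 : (p - g) * (2 * (γ - 1)) = p * (r - 1) := by linear_combination hγp - 2 * hgγ
  have h3 : 2 * (γ - 1) ≤ M * (β - 1) := by
    rw [hMdef, div_mul_eq_mul_div, le_div_iff₀ (by linarith)]
    have t1 := mul_le_mul_of_nonneg_right (show 2 * (γ - 1) ≤ 3 * p' by linarith)
      (show (0:ℝ) ≤ p' - 1 by linarith)
    have t2 := mul_le_mul_of_nonneg_left (show p' - 1 ≤ β - 1 by linarith)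
      (show (0:ℝ) ≤ 4 * p' by linarith)
    linarith [t1, t2, mul_nonneg hp'0.le (show (0:ℝ) ≤ p' - 1 by linarith)]
  have A3 : p - b ≤ M * (p - g) := by
    apply le_of_mul_le_mul_right _ hβ1'
    calc (p - b) * (β - 1) = (p - g) * (2 * (γ - 1)) := by rw [e1, e2]
      _ ≤ (p - g) * (M * (β - 1)) := mul_le_mul_of_nonneg_left h3 hpg.le
      _ = M * (p - g) * (β - 1) := by ring
  have step_mid : (1/2 : ℝ) ^ (g - p) / (p - g) ≤ D * M / (p - b) := by
    rw [div_le_div_iff₀ hpg hpb]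
    calc (1/2 : ℝ) ^ (g - p) * (p - b) ≤ D * (M * (p - g)) :=
          mul_le_mul A2 A3 hpb.le hD0.le
      _ = D * M * (p - g) := by ring
  calc γ ^ (1 - g) / g * ((1/2 : ℝ) ^ (g - p) / (p - g))
      ≤ 1 * (D * M / (p - b)) := by
        apply mul_le_mul A1 step_mid _ one_pos.le
        exact div_nonneg (Real.rpow_nonneg (by norm_num) _) hpg.le
    _ = (D * M / k0) * (k0 * (1 * (1 / (p - b)))) := by
        field_simp
    _ ≤ (D * M / k0) * (β ^ (1 - b) / b * ((1/2 : ℝ) ^ (b - p) * (1 / (p - b)))) := by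
        apply mul_le_mul_of_nonneg_left _ (by positivity)
        apply mul_le_mul B1 _ (by positivity) _
        · exact mul_le_mul_of_nonneg_right B2 (le_of_lt (one_div_pos.mpr hpb))
        · exact le_trans hk00.le B1
    _ = (D * M / k0) * (β ^ (1 - b) / b * ((1/2 : ℝ) ^ (b - p) / (p - b))) := by
        rw [mul_one_div]
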